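/- Let t ∈ ℝ with t ∉ {−1,0,1}. For nonzero vectors x, y ∈ ℝ³, one has p_t(x,y) = 0 if and only if there exist nonzero real scalars λ, μ and a pair (u,v) in the list Z_t = {((1,1,1),(1,1,1)), ((1,1,−1),(1,1,−1)), ((1,−1,1),(1,−1,1)), ((−1,1,1),(−1,1,1)), ((1,t,0),(t,1,0)), ((1,−t,0),(−t,1,0)), ((0,1,t),(0,t,1)), ((0,1,−t),(0,−t,1)), ((t,0,1),(1,0,t)), ((−t,0,1),(1,0,−t))} such that x = λu and y = μv. -/
import Mathlib


/-- The biquadratic form `p_t(x, y) = yᵀ Φ_t(xxᵀ) y`. -/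
def pform (t : ℝ) (x y : Fin 3 → ℝ) : ℝ :=
  ((t^2-1)^2 * x 0^2 + x 1^2 + t^4 * x 2^2) * y 0^2 +
  ((t^2-1)^2 * x 1^2 + x 2^2 + t^4 * x 0^2) * y 1^2 +
  ((t^2-1)^2 * x 2^2 + x 0^2 + t^4 * x 1^2) * y 2^2 -
  2 * (t^4-t^2+1) * (x 0 * x 1 * y 0 * y 1 + x 0 * x 2 * y 0 * y 2 + x 1 * x 2 * y 1 * y 2)

/-- The ten pairs of vectors giving the zeros of `p_t` in `ℙ² × ℙ²`. -/
def Zlist (t : ℝ) : List ((Fin 3 → ℝ) × (Fin 3 → ℝ)) :=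
  [(![1, 1, 1], ![1, 1, 1]), (![1, 1, -1], ![1, 1, -1]),
   (![1, -1, 1], ![1, -1, 1]), (![-1, 1, 1], ![-1, 1, 1]),
   (![1, t, 0], ![t, 1, 0]), (![1, -t, 0], ![-t, 1, 0]),
   (![0, 1, t], ![0, t, 1]), (![0, 1, -t], ![0, -t, 1]),
   (![t, 0, 1], ![1, 0, t]), (![-t, 0, 1], ![1, 0, -t])]

set_option maxHeartbeats 1600000

def Ps (t x1 x2 x3 y1 y2 y3 : ℝ) : ℝ :=
  ((t^2-1)^2 * x1^2 + x2^2 + t^4 * x3^2) * y1^2 +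
  ((t^2-1)^2 * x2^2 + x3^2 + t^4 * x1^2) * y2^2 +
  ((t^2-1)^2 * x3^2 + x1^2 + t^4 * x2^2) * y3^2 -
  2 * (t^4-t^2+1) * (x1 * x2 * y1 * y2 + x1 * x3 * y1 * y3 + x2 * x3 * y2 * y3)

def a11 (t x1 x2 x3 : ℝ) : ℝ := (t^2-1)^2*x1^2 + x2^2 + t^4*x3^2
def a22 (t x1 x2 x3 : ℝ) : ℝ := (t^2-1)^2*x2^2 + x3^2 + t^4*x1^2
def a33 (t x1 x2 x3 : ℝ) : ℝ := (t^2-1)^2*x3^2 + x1^2 + t^4*x2^2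
def m2 (t x1 x2 x3 : ℝ) : ℝ := a11 t x1 x2 x3 * a22 t x1 x2 x3 - (t^4-t^2+1)^2*x1^2*x2^2
def nn (t x1 x2 x3 : ℝ) : ℝ := -((t^4-t^2+1)*x2*x3*(a11 t x1 x2 x3 + (t^4-t^2+1)*x1^2))
def dd (t x1 x2 x3 : ℝ) : ℝ :=
  a11 t x1 x2 x3 * a22 t x1 x2 x3 * a33 t x1 x2 x3
  - (t^4-t^2+1)^2*(a11 t x1 x2 x3 * x2^2*x3^2 + a22 t x1 x2 x3 * x1^2*x3^2
      + a33 t x1 x2 x3 * x1^2*x2^2)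
  - 2*(t^4-t^2+1)^3*x1^2*x2^2*x3^2

def Ecub (u a b c : ℝ) : ℝ :=
  u^2*(a^3+b^3+c^3) + (1-2*u^3)*(a*b^2+b*c^2+c*a^2) + (u^4-2*u)*(a^2*b+b^2*c+c^2*a)
  - 3*(u^4-2*u^3+u^2-2*u+1)*(a*b*c)

lemma sqpos {x : ℝ} (h : x ≠ 0) : 0 < x^2 :=
  (sq_nonneg x).lt_of_ne' (pow_ne_zero 2 h)

lemma s_pos (t : ℝ) : 0 < t^4 - t^2 + 1 := by nlinarith [sq_nonneg (t^2 - 1/2)]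

lemma sqzero {x : ℝ} (h : x^2 = 0) : x = 0 := by
  nlinarith [sq_nonneg x, sq_abs x, abs_nonneg x]

lemma keyI2 (t x1 x2 x3 y1 y2 y3 : ℝ) :
    a11 t x1 x2 x3 * m2 t x1 x2 x3 * Ps t x1 x2 x3 y1 y2 y3 =
    m2 t x1 x2 x3 * (a11 t x1 x2 x3 * y1 - (t^4-t^2+1)*x1*x2*y2 - (t^4-t^2+1)*x1*x3*y3)^2
    + (m2 t x1 x2 x3 * y2 + nn t x1 x2 x3 * y3)^2
    + a11 t x1 x2 x3 * dd t x1 x2 x3 * y3^2 := by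
  simp only [a11, a22, a33, m2, nn, dd, Ps]; ring

lemma ddE (t x1 x2 x3 : ℝ) :
    dd t x1 x2 x3 = (t^2-1)^2 * Ecub (t^2) (x1^2) (x2^2) (x3^2) := by
  simp only [dd, a11, a22, a33, Ecub]; ring

lemma Ps_cyc (t x1 x2 x3 y1 y2 y3 : ℝ) :
    Ps t x1 x2 x3 y1 y2 y3 = Ps t x2 x3 x1 y2 y3 y1 := by
  simp only [Ps]; ring

lemma Ecore1 (u a b c : ℝ) (hc : 0 < c) (h1 : b ≤ a) (h2 : c ≤ b)
    (hne : ¬(a = b ∧ b = c)) : 0 < Ecub u a b c := by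
  have hid : Ecub u a b c =
      (u^2-u+1)^2*((a-b)^2+(a-b)*(b-c)+(b-c)^2)*c
      + (u*(a-b)-(1-u)*(b-c))^2*((a-b)+(u^2+1)*(b-c)) := by
    simp only [Ecub]; ring
  have hs : 0 < u^2-u+1 := by nlinarith [sq_nonneg (u - 1/2)]
  have hg : 0 <= a - b := by linarith
  have hh : 0 <= b - c := by linarith
  have hkey : 0 < (a-b)^2+(a-b)*(b-c)+(b-c)^2 := by
    rcases lt_or_eq_of_le h1 with h | h
    . nlinarith [mul_nonneg hg hh]
    . have h3 : b ≠ c := fun hbc => hne ⟨h.symm, hbc⟩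
      have : c < b := lt_of_le_of_ne h2 (Ne.symm h3)
      nlinarith [mul_nonneg hg hh]
  have t1 : 0 < (u^2-u+1)^2*((a-b)^2+(a-b)*(b-c)+(b-c)^2)*c :=
    mul_pos (mul_pos (pow_pos hs 2) hkey) hc
  have t2 : 0 <= (u*(a-b)-(1-u)*(b-c))^2*((a-b)+(u^2+1)*(b-c)) := by
    apply mul_nonneg (sq_nonneg _)
    nlinarith [sq_nonneg u]
  linarith [hid ▸ (by linarith : (0:ℝ) < (u^2-u+1)^2*((a-b)^2+(a-b)*(b-c)+(b-c)^2)*c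
      + (u*(a-b)-(1-u)*(b-c))^2*((a-b)+(u^2+1)*(b-c)))]

lemma Ecore2 (u a b c : ℝ) (hb : 0 < b) (h1 : c ≤ a) (h2 : b ≤ c)
    (hne : ¬(a = c ∧ c = b)) : 0 < Ecub u a b c := by
  have hid : Ecub u a b c =
      (u^2-u+1)^2*((a-c)^2+(a-c)*(c-b)+(c-b)^2)*b
      + ((a-c)+(1-u)*(c-b))^2*(u^2*(a-c)+(u^2+1)*(c-b)) := by
    simp only [Ecub]; ring
  have hs : 0 < u^2-u+1 := by nlinarith [sq_nonneg (u - 1/2)]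
  have hg : 0 <= a - c := by linarith
  have hh : 0 <= c - b := by linarith
  have hkey : 0 < (a-c)^2+(a-c)*(c-b)+(c-b)^2 := by
    rcases lt_or_eq_of_le h1 with h | h
    . nlinarith [mul_nonneg hg hh]
    . have h3 : c ≠ b := fun hcb => hne ⟨h.symm, hcb⟩
      have : b < c := lt_of_le_of_ne h2 (Ne.symm h3)
      nlinarith [mul_nonneg hg hh]
  have t1 : 0 < (u^2-u+1)^2*((a-c)^2+(a-c)*(c-b)+(c-b)^2)*b :=
    mul_pos (mul_pos (pow_pos hs 2) hkey) hb
  have t2 : 0 <= ((a-c)+(1-u)*(c-b))^2*(u^2*(a-c)+(u^2+1)*(c-b)) := by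
    apply mul_nonneg (sq_nonneg _)
    nlinarith [sq_nonneg u]
  linarith [hid ▸ (by linarith : (0:ℝ) < (u^2-u+1)^2*((a-c)^2+(a-c)*(c-b)+(c-b)^2)*b
      + ((a-c)+(1-u)*(c-b))^2*(u^2*(a-c)+(u^2+1)*(c-b)))]

lemma Epos (u a b c : ℝ) (ha : 0 < a) (hb : 0 < b) (hc : 0 < c)
    (hne : ¬(b = a ∧ c = a)) : 0 < Ecub u a b c := by
  have cyc1 : Ecub u a b c = Ecub u b c a := by simp only [Ecub]; ring
  have cyc2 : Ecub u a b c = Ecub u c a b := by simp only [Ecub]; ring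
  rcases le_total b a with h1 | h1 <;> rcases le_total c b with h2 | h2 <;>
    rcases le_total c a with h3 | h3
  . exact Ecore1 u a b c hc h1 h2 (fun ⟨e1, e2⟩ => hne ⟨by linarith, by linarith⟩)
  . exact absurd ⟨by linarith, by linarith⟩ hne
  . exact Ecore2 u a b c hb h3 h2 (fun ⟨e1, e2⟩ => hne ⟨by linarith, by linarith⟩)
  . rw [cyc2]; exact Ecore1 u c a b hb h3 h1 (fun ⟨e1, e2⟩ => hne ⟨by linarith, by linarith⟩)
  . rw [cyc1]; exact Ecore2 u b c a hc h1 h3 (fun ⟨e1, e2⟩ => hne ⟨by linarith, by linarith⟩)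
  . rw [cyc1]; exact Ecore1 u b c a ha h2 h3 (fun ⟨e1, e2⟩ => hne ⟨by linarith, by linarith⟩)
  . exact absurd ⟨by linarith, by linarith⟩ hne
  . rw [cyc2]; exact Ecore2 u c a b ha h2 h1 (fun ⟨e1, e2⟩ => hne ⟨by linarith, by linarith⟩)

lemma pzEdge (t x1 x2 y1 y2 y3 : ℝ) (ht0 : t ≠ 0) (ht1 : t^2 - 1 ≠ 0)
    (hx : ¬(x1 = 0 ∧ x2 = 0)) (hy : ¬(y1 = 0 ∧ y2 = 0 ∧ y3 = 0))
    (hp : Ps t x1 x2 0 y1 y2 y3 = 0) :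
    (x2 = t*x1 ∧ y1 = t*y2 ∧ y3 = 0 ∧ x1 ≠ 0 ∧ y2 ≠ 0) ∨
    (x2 = -(t*x1) ∧ y1 = -(t*y2) ∧ y3 = 0 ∧ x1 ≠ 0 ∧ y2 ≠ 0) := by
  have hs := s_pos t
  have ht2 : (0:ℝ) < t^2 := sqpos ht0
  have hK : (0:ℝ) < (t^2-1)^2 := sqpos ht1
  have hA : 0 < (t^2-1)^2*x1^2 + x2^2 := by
    by_cases h1 : x1 = 0
    . have h2 : x2 ≠ 0 := fun h2 => hx ⟨h1, h2⟩
      have := sqpos h2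
      nlinarith [mul_nonneg hK.le (sq_nonneg x1)]
    . nlinarith [mul_pos hK (sqpos h1), sq_nonneg x2]
  have hC : 0 < x1^2 + t^4*x2^2 := by
    by_cases h1 : x1 = 0
    . have h2 : x2 ≠ 0 := fun h2 => hx ⟨h1, h2⟩
      nlinarith [mul_pos (mul_pos ht2 ht2) (sqpos h2), sq_nonneg x1]
    . nlinarith [sqpos h1, mul_nonneg (mul_pos ht2 ht2).le (sq_nonneg x2)]
  have hI1 : (((t^2-1)^2*x1^2 + x2^2)*y1 - (t^4-t^2+1)*x1*x2*y2)^2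
      + (t^2-1)^2*(t^2*x1^2-x2^2)^2*y2^2
      + ((t^2-1)^2*x1^2 + x2^2)*((x1^2 + t^4*x2^2)*y3^2) =
      ((t^2-1)^2*x1^2 + x2^2) * Ps t x1 x2 0 y1 y2 y3 := by
    simp only [Ps]; ring
  rw [hp, mul_zero] at hI1
  have n1 : 0 <= (((t^2-1)^2*x1^2 + x2^2)*y1 - (t^4-t^2+1)*x1*x2*y2)^2 := sq_nonneg _
  have n2 : 0 <= (t^2-1)^2*(t^2*x1^2-x2^2)^2*y2^2 :=
    mul_nonneg (mul_nonneg hK.le (sq_nonneg _)) (sq_nonneg _)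
  have n3 : 0 <= ((t^2-1)^2*x1^2 + x2^2)*((x1^2 + t^4*x2^2)*y3^2) :=
    mul_nonneg hA.le (mul_nonneg hC.le (sq_nonneg _))
  have e3 : y3 = 0 := by
    apply sqzero
    have hz : ((t^2-1)^2*x1^2 + x2^2)*((x1^2 + t^4*x2^2)*y3^2) = 0 := by linarith
    by_contra h
    have h5 : 0 < y3^2 := (sq_nonneg y3).lt_of_ne' h
    linarith [mul_pos hA (mul_pos hC h5)]
  subst e3
  have hz2 : (t^2-1)^2*(t^2*x1^2-x2^2)^2*y2^2 = 0 := by linarith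
  have hz1 : ((t^2-1)^2*x1^2 + x2^2)*y1 - (t^4-t^2+1)*x1*x2*y2 = 0 := by
    apply sqzero; linarith
  by_cases h2 : y2 = 0
  . exfalso
    subst h2
    have : y1 = 0 := by
      have : ((t^2-1)^2*x1^2 + x2^2)*y1 = 0 := by linarith [hz1]
      rcases mul_eq_zero.mp this with h | h
      . exact absurd h hA.ne'
      . exact h
    exact hy ⟨this, rfl, rfl⟩
  . have hsq : t^2*x1^2 - x2^2 = 0 := by
      by_contra h
      have h4 : 0 < ((t^2-1)^2*(t^2*x1^2-x2^2)^2)*y2^2 :=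
        mul_pos (mul_pos hK (sqpos h)) (sqpos h2)
      linarith
    have hx1 : x1 ≠ 0 := by
      intro h1
      apply hx
      refine ⟨h1, sqzero ?_⟩
      rw [h1] at hsq; nlinarith
    have hfac : (x2 - t*x1)*(x2 + t*x1) = 0 := by linear_combination -hsq
    rcases mul_eq_zero.mp hfac with h | h
    . left
      have hx2v : x2 = t*x1 := by linarith
      refine ⟨hx2v, ?_, rfl, hx1, h2⟩
      have : (t^4-t^2+1)*x1^2*(y1 - t*y2) = 0 := by
        rw [hx2v] at hz1; linear_combination hz1
      rcases mul_eq_zero.mp this with h' | h'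
      . exact absurd h' (mul_pos hs (sqpos hx1)).ne'
      . linarith
    . right
      have hx2v : x2 = -(t*x1) := by linarith
      refine ⟨hx2v, ?_, rfl, hx1, h2⟩
      have : (t^4-t^2+1)*x1^2*(y1 + t*y2) = 0 := by
        rw [hx2v] at hz1; linear_combination hz1
      rcases mul_eq_zero.mp this with h' | h'
      . exact absurd h' (mul_pos hs (sqpos hx1)).ne'
      . linarith

lemma pzInterior (t x1 x2 x3 y1 y2 y3 : ℝ) (ht0 : t ≠ 0) (ht1 : t^2 - 1 ≠ 0)
    (h1 : x1 ≠ 0) (h2 : x2 ≠ 0) (h3 : x3 ≠ 0)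
    (hy : ¬(y1 = 0 ∧ y2 = 0 ∧ y3 = 0)) (hp : Ps t x1 x2 x3 y1 y2 y3 = 0) :
    (x2 = x1 ∧ x3 = x1 ∧ y1 = y3 ∧ y2 = y3 ∧ y3 ≠ 0) ∨
    (x2 = x1 ∧ x3 = -x1 ∧ y1 = -y3 ∧ y2 = -y3 ∧ y3 ≠ 0) ∨
    (x2 = -x1 ∧ x3 = x1 ∧ y1 = y3 ∧ y2 = -y3 ∧ y3 ≠ 0) ∨
    (x2 = -x1 ∧ x3 = -x1 ∧ y1 = -y3 ∧ y2 = y3 ∧ y3 ≠ 0) := by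
  have hs := s_pos t
  have ht2 : (0:ℝ) < t^2 := sqpos ht0
  have hK : (0:ℝ) < (t^2-1)^2 := sqpos ht1
  have hx1 := sqpos h1
  have hx2 := sqpos h2
  have hx3 := sqpos h3
  have hA : 0 < a11 t x1 x2 x3 := by
    simp only [a11]
    nlinarith [mul_nonneg hK.le (sq_nonneg x1), mul_nonneg (mul_pos ht2 ht2).le (sq_nonneg x3)]
  have hM : 0 < m2 t x1 x2 x3 := by
    have hMid : m2 t x1 x2 x3 = (t^2-1)^2*(t^2*x1^2-x2^2)^2
        + ((t^2-1)^2*x1^2 + x2^2)*x3^2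
        + t^4*((t^2-1)^2*x2^2 + t^4*x1^2)*x3^2 + t^4*x3^4 := by
      simp only [m2, a11, a22]; ring
    rw [hMid]
    have p1 : 0 <= (t^2-1)^2*(t^2*x1^2-x2^2)^2 := mul_nonneg hK.le (sq_nonneg _)
    have p2 : 0 <= ((t^2-1)^2*x1^2 + x2^2)*x3^2 := by
      apply mul_nonneg _ (sq_nonneg _)
      nlinarith [mul_nonneg hK.le (sq_nonneg x1), sq_nonneg x2]
    have p3 : 0 <= t^4*((t^2-1)^2*x2^2 + t^4*x1^2)*x3^2 := by
      apply mul_nonneg (mul_nonneg (by nlinarith : (0:ℝ) <= t^4) _) (sq_nonneg _)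
      nlinarith [mul_nonneg hK.le (sq_nonneg x2), mul_nonneg (mul_pos ht2 ht2).le (sq_nonneg x1)]
    have p4 : 0 < t^4*x3^4 := by nlinarith [mul_pos (mul_pos ht2 ht2) (mul_pos hx3 hx3)]
    linarith
  have hI2 := keyI2 t x1 x2 x3 y1 y2 y3
  rw [hp, mul_zero] at hI2
  have n1 : 0 <= m2 t x1 x2 x3 * (a11 t x1 x2 x3 * y1 - (t^4-t^2+1)*x1*x2*y2
      - (t^4-t^2+1)*x1*x3*y3)^2 := mul_nonneg hM.le (sq_nonneg _)
  have n2 : 0 <= (m2 t x1 x2 x3 * y2 + nn t x1 x2 x3 * y3)^2 := sq_nonneg _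
  by_cases hdg : x2^2 = x1^2 ∧ x3^2 = x1^2
  . obtain ⟨hb, hc⟩ := hdg
    have hdd0 : dd t x1 x2 x3 = 0 := by
      rw [ddE]
      have hz : Ecub (t^2) (x1^2) (x2^2) (x3^2) = 0 := by
        simp only [Ecub]; rw [hb, hc]; ring
      rw [hz, mul_zero]
    rw [hdd0] at hI2
    have hI2' : 0 = m2 t x1 x2 x3 * (a11 t x1 x2 x3 * y1 - (t^4-t^2+1)*x1*x2*y2
        - (t^4-t^2+1)*x1*x3*y3)^2 + (m2 t x1 x2 x3 * y2 + nn t x1 x2 x3 * y3)^2 := by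
      linear_combination hI2
    have hz1 : a11 t x1 x2 x3 * y1 - (t^4-t^2+1)*x1*x2*y2 - (t^4-t^2+1)*x1*x3*y3 = 0 := by
      apply sqzero
      have hq : m2 t x1 x2 x3 * (a11 t x1 x2 x3 * y1 - (t^4-t^2+1)*x1*x2*y2
          - (t^4-t^2+1)*x1*x3*y3)^2 = 0 := by linarith
      exact (mul_eq_zero.mp hq).resolve_left hM.ne'
    have hq2 : m2 t x1 x2 x3 * y2 + nn t x1 x2 x3 * y3 = 0 := by
      apply sqzero; linarith
    have hpos34 : 0 < 3*(t^4-t^2+1)^2*x1^4 := by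
      nlinarith [mul_pos (mul_pos hs hs) (mul_pos hx1 hx1)]
    have hsx2 : x2 = x1 ∨ x2 = -x1 := by
      have hf : (x2 - x1)*(x2 + x1) = 0 := by linear_combination hb
      rcases mul_eq_zero.mp hf with h | h
      . left; linarith
      . right; linarith
    have hsx3 : x3 = x1 ∨ x3 = -x1 := by
      have hf : (x3 - x1)*(x3 + x1) = 0 := by linear_combination hc
      rcases mul_eq_zero.mp hf with h | h
      . left; linarith
      . right; linarith
    rcases hsx2 with h2v | h2v
    . rcases hsx3 with h3v | h3v
      . have hq2' : 3*(t^4-t^2+1)^2*x1^4*(y2 - y3) = 0 := by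
          simp only [m2, nn, a11, a22] at hq2
          rw [h2v, h3v] at hq2
          linear_combination hq2
        have hy23 : y2 = y3 := by
          have := (mul_eq_zero.mp hq2').resolve_left hpos34.ne'
          linarith
        have hq1' : (t^4-t^2+1)*x1^2*(2*y1 - 2*(y3)) = 0 := by
          simp only [a11] at hz1
          rw [h2v, h3v] at hz1
          linear_combination hz1 + ((t^4-t^2+1)*x1^2)*hy23
        have hy1v : y1 = y3 := by
          have := (mul_eq_zero.mp hq1').resolve_left (mul_pos hs hx1).ne'
          linarith
        have hy3 : y3 ≠ 0 := by
          intro h0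
          exact hy ⟨by linarith, by linarith, h0⟩
        exact Or.inl ⟨h2v, h3v, hy1v, hy23, hy3⟩
      . have hq2' : 3*(t^4-t^2+1)^2*x1^4*(y2 - (-y3)) = 0 := by
          simp only [m2, nn, a11, a22] at hq2
          rw [h2v, h3v] at hq2
          linear_combination hq2
        have hy23 : y2 = -y3 := by
          have := (mul_eq_zero.mp hq2').resolve_left hpos34.ne'
          linarith
        have hq1' : (t^4-t^2+1)*x1^2*(2*y1 - 2*(-y3)) = 0 := by
          simp only [a11] at hz1
          rw [h2v, h3v] at hz1
          linear_combination hz1 + ((t^4-t^2+1)*x1^2)*hy23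
        have hy1v : y1 = -y3 := by
          have := (mul_eq_zero.mp hq1').resolve_left (mul_pos hs hx1).ne'
          linarith
        have hy3 : y3 ≠ 0 := by
          intro h0
          exact hy ⟨by linarith, by linarith, h0⟩
        exact Or.inr (Or.inl ⟨h2v, h3v, hy1v, hy23, hy3⟩)
    . rcases hsx3 with h3v | h3v
      . have hq2' : 3*(t^4-t^2+1)^2*x1^4*(y2 - (-y3)) = 0 := by
          simp only [m2, nn, a11, a22] at hq2
          rw [h2v, h3v] at hq2
          linear_combination hq2
        have hy23 : y2 = -y3 := by
          have := (mul_eq_zero.mp hq2').resolve_left hpos34.ne'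
          linarith
        have hq1' : (t^4-t^2+1)*x1^2*(2*y1 - 2*(y3)) = 0 := by
          simp only [a11] at hz1
          rw [h2v, h3v] at hz1
          linear_combination hz1 - ((t^4-t^2+1)*x1^2)*hy23
        have hy1v : y1 = y3 := by
          have := (mul_eq_zero.mp hq1').resolve_left (mul_pos hs hx1).ne'
          linarith
        have hy3 : y3 ≠ 0 := by
          intro h0
          exact hy ⟨by linarith, by linarith, h0⟩
        exact Or.inr (Or.inr (Or.inl ⟨h2v, h3v, hy1v, hy23, hy3⟩))
      . have hq2' : 3*(t^4-t^2+1)^2*x1^4*(y2 - y3) = 0 := by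
          simp only [m2, nn, a11, a22] at hq2
          rw [h2v, h3v] at hq2
          linear_combination hq2
        have hy23 : y2 = y3 := by
          have := (mul_eq_zero.mp hq2').resolve_left hpos34.ne'
          linarith
        have hq1' : (t^4-t^2+1)*x1^2*(2*y1 - 2*(-y3)) = 0 := by
          simp only [a11] at hz1
          rw [h2v, h3v] at hz1
          linear_combination hz1 - ((t^4-t^2+1)*x1^2)*hy23
        have hy1v : y1 = -y3 := by
          have := (mul_eq_zero.mp hq1').resolve_left (mul_pos hs hx1).ne'
          linarith
        have hy3 : y3 ≠ 0 := by
          intro h0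
          exact hy ⟨by linarith, by linarith, h0⟩
        exact Or.inr (Or.inr (Or.inr ⟨h2v, h3v, hy1v, hy23, hy3⟩))
  . exfalso
    have hdd : 0 < dd t x1 x2 x3 := by
      rw [ddE]
      exact mul_pos hK (Epos (t^2) (x1^2) (x2^2) (x3^2) hx1 hx2 hx3 hdg)
    have n3 : 0 <= a11 t x1 x2 x3 * dd t x1 x2 x3 * y3^2 :=
      mul_nonneg (mul_nonneg hA.le hdd.le) (sq_nonneg _)
    have e3 : y3 = 0 := by
      apply sqzero
      have hq3 : a11 t x1 x2 x3 * dd t x1 x2 x3 * y3^2 = 0 := by linarith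
      exact (mul_eq_zero.mp hq3).resolve_left (mul_pos hA hdd).ne'
    subst e3
    have hI2' : 0 = m2 t x1 x2 x3 * (a11 t x1 x2 x3 * y1 - (t^4-t^2+1)*x1*x2*y2)^2
        + (m2 t x1 x2 x3 * y2)^2 := by linear_combination hI2
    have m1 : 0 <= m2 t x1 x2 x3 * (a11 t x1 x2 x3 * y1 - (t^4-t^2+1)*x1*x2*y2)^2 :=
      mul_nonneg hM.le (sq_nonneg _)
    have e2 : y2 = 0 := by
      have hq : m2 t x1 x2 x3 * y2 = 0 := by
        apply sqzero; linarith [sq_nonneg (m2 t x1 x2 x3 * y2)]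
      exact (mul_eq_zero.mp hq).resolve_left hM.ne'
    subst e2
    have e1 : y1 = 0 := by
      have hq : m2 t x1 x2 x3 * (a11 t x1 x2 x3 * y1 - (t^4-t^2+1)*x1*x2*0)^2 = 0 := by
        linarith [sq_nonneg (m2 t x1 x2 x3 * (0:ℝ))]
      have hq2 := sqzero ((mul_eq_zero.mp hq).resolve_left hM.ne')
      have : a11 t x1 x2 x3 * y1 = 0 := by linear_combination hq2
      exact (mul_eq_zero.mp this).resolve_left hA.ne'
    exact hy ⟨e1, rfl, rfl⟩

lemma pzMaster (t x1 x2 x3 y1 y2 y3 : ℝ) (ht0 : t ≠ 0) (ht1 : t^2 - 1 ≠ 0)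
    (hx : ¬(x1 = 0 ∧ x2 = 0 ∧ x3 = 0)) (hy : ¬(y1 = 0 ∧ y2 = 0 ∧ y3 = 0))
    (hp : Ps t x1 x2 x3 y1 y2 y3 = 0) :
    (x2 = x1 ∧ x3 = x1 ∧ y1 = y3 ∧ y2 = y3 ∧ x1 ≠ 0 ∧ y3 ≠ 0) ∨
    (x2 = x1 ∧ x3 = -x1 ∧ y1 = -y3 ∧ y2 = -y3 ∧ x1 ≠ 0 ∧ y3 ≠ 0) ∨
    (x2 = -x1 ∧ x3 = x1 ∧ y1 = y3 ∧ y2 = -y3 ∧ x1 ≠ 0 ∧ y3 ≠ 0) ∨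
    (x2 = -x1 ∧ x3 = -x1 ∧ y1 = -y3 ∧ y2 = y3 ∧ x1 ≠ 0 ∧ y3 ≠ 0) ∨
    (x3 = 0 ∧ x2 = t*x1 ∧ y3 = 0 ∧ y1 = t*y2 ∧ x1 ≠ 0 ∧ y2 ≠ 0) ∨
    (x3 = 0 ∧ x2 = -(t*x1) ∧ y3 = 0 ∧ y1 = -(t*y2) ∧ x1 ≠ 0 ∧ y2 ≠ 0) ∨
    (x1 = 0 ∧ x3 = t*x2 ∧ y1 = 0 ∧ y2 = t*y3 ∧ x2 ≠ 0 ∧ y3 ≠ 0) ∨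
    (x1 = 0 ∧ x3 = -(t*x2) ∧ y1 = 0 ∧ y2 = -(t*y3) ∧ x2 ≠ 0 ∧ y3 ≠ 0) ∨
    (x2 = 0 ∧ x1 = t*x3 ∧ y2 = 0 ∧ y3 = t*y1 ∧ x3 ≠ 0 ∧ y1 ≠ 0) ∨
    (x2 = 0 ∧ x1 = -(t*x3) ∧ y2 = 0 ∧ y3 = -(t*y1) ∧ x3 ≠ 0 ∧ y1 ≠ 0) := by
  by_cases h3 : x3 = 0
  · subst h3
    have hx12 : ¬(x1 = 0 ∧ x2 = 0) := fun ⟨a, b⟩ => hx ⟨a, b, rfl⟩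
    rcases pzEdge t x1 x2 y1 y2 y3 ht0 ht1 hx12 hy hp with ⟨e1, e2, e3, e4, e5⟩ | ⟨e1, e2, e3, e4, e5⟩
    · exact Or.inr (Or.inr (Or.inr (Or.inr (Or.inl ⟨rfl, e1, e3, e2, e4, e5⟩))))
    · exact Or.inr (Or.inr (Or.inr (Or.inr (Or.inr (Or.inl ⟨rfl, e1, e3, e2, e4, e5⟩)))))
  · by_cases h1 : x1 = 0
    · subst h1
      rw [Ps_cyc] at hp
      have hx23 : ¬(x2 = 0 ∧ x3 = 0) := fun ⟨a, b⟩ => hx ⟨rfl, a, b⟩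
      have hy' : ¬(y2 = 0 ∧ y3 = 0 ∧ y1 = 0) := fun ⟨a, b, c⟩ => hy ⟨c, a, b⟩
      rcases pzEdge t x2 x3 y2 y3 y1 ht0 ht1 hx23 hy' hp with ⟨e1, e2, e3, e4, e5⟩ | ⟨e1, e2, e3, e4, e5⟩
      · exact Or.inr (Or.inr (Or.inr (Or.inr (Or.inr (Or.inr (Or.inl ⟨rfl, e1, e3, e2, e4, e5⟩))))))
      · exact Or.inr (Or.inr (Or.inr (Or.inr (Or.inr (Or.inr (Or.inr (Or.inl ⟨rfl, e1, e3, e2, e4, e5⟩)))))))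
    · by_cases h2 : x2 = 0
      · subst h2
        rw [Ps_cyc, Ps_cyc] at hp
        have hx31 : ¬(x3 = 0 ∧ x1 = 0) := fun ⟨a, b⟩ => hx ⟨b, rfl, a⟩
        have hy' : ¬(y3 = 0 ∧ y1 = 0 ∧ y2 = 0) := fun ⟨a, b, c⟩ => hy ⟨b, c, a⟩
        rcases pzEdge t x3 x1 y3 y1 y2 ht0 ht1 hx31 hy' hp with ⟨e1, e2, e3, e4, e5⟩ | ⟨e1, e2, e3, e4, e5⟩
        · exact Or.inr (Or.inr (Or.inr (Or.inr (Or.inr (Or.inr (Or.inr (Or.inr (Or.inl ⟨rfl, e1, e3, e2, e4, e5⟩))))))))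
        · exact Or.inr (Or.inr (Or.inr (Or.inr (Or.inr (Or.inr (Or.inr (Or.inr (Or.inr ⟨rfl, e1, e3, e2, e4, e5⟩))))))))
      · rcases pzInterior t x1 x2 x3 y1 y2 y3 ht0 ht1 h1 h2 h3 hy hp with
          ⟨e1, e2, e3, e4, e5⟩ | ⟨e1, e2, e3, e4, e5⟩ | ⟨e1, e2, e3, e4, e5⟩ | ⟨e1, e2, e3, e4, e5⟩
        · exact Or.inl ⟨e1, e2, e3, e4, h1, e5⟩
        · exact Or.inr (Or.inl ⟨e1, e2, e3, e4, h1, e5⟩)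
        · exact Or.inr (Or.inr (Or.inl ⟨e1, e2, e3, e4, h1, e5⟩))
        · exact Or.inr (Or.inr (Or.inr (Or.inl ⟨e1, e2, e3, e4, h1, e5⟩)))

lemma pform_eq_Ps (t : ℝ) (x y : Fin 3 → ℝ) :
    pform t x y = Ps t (x 0) (x 1) (x 2) (y 0) (y 1) (y 2) := rfl

/-- For `t ∉ {-1, 0, 1}` and nonzero `x, y ∈ ℝ³`, `p_t(x, y) = 0` iff `(x, y)` is, up to
independent nonzero scalings, one of the ten pairs in the list `Z_t`. -/
theorem pform_zero_iff (t : ℝ) (ht : t ∉ ({-1, 0, 1} : Set ℝ))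
    (x y : Fin 3 → ℝ) (hx : x ≠ 0) (hy : y ≠ 0) :
    pform t x y = 0 ↔
      ∃ (l m : ℝ), l ≠ 0 ∧ m ≠ 0 ∧ ∃ uv ∈ Zlist t, x = l • uv.1 ∧ y = m • uv.2 := by
  simp only [Set.mem_insert_iff, Set.mem_singleton_iff, not_or] at ht
  obtain ⟨htm1, ht0, ht1⟩ := ht
  have htsq : t^2 - 1 ≠ 0 := by
    intro h
    have hf : (t-1)*(t+1) = 0 := by linear_combination h
    rcases mul_eq_zero.mp hf with h' | h'
    · exact ht1 (by linarith)
    · exact htm1 (by linarith)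
  constructor
  · intro hp
    have hx' : ¬(x 0 = 0 ∧ x 1 = 0 ∧ x 2 = 0) := by
      intro ⟨a, b, c⟩
      exact hx (funext fun i => by fin_cases i <;> simpa)
    have hy' : ¬(y 0 = 0 ∧ y 1 = 0 ∧ y 2 = 0) := by
      intro ⟨a, b, c⟩
      exact hy (funext fun i => by fin_cases i <;> simpa)
    rw [pform_eq_Ps] at hp
    rcases pzMaster t (x 0) (x 1) (x 2) (y 0) (y 1) (y 2) ht0 htsq hx' hy' hp with
      ⟨e1, e2, e3, e4, e5, e6⟩ | ⟨e1, e2, e3, e4, e5, e6⟩ | ⟨e1, e2, e3, e4, e5, e6⟩ |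
      ⟨e1, e2, e3, e4, e5, e6⟩ | ⟨e1, e2, e3, e4, e5, e6⟩ | ⟨e1, e2, e3, e4, e5, e6⟩ |
      ⟨e1, e2, e3, e4, e5, e6⟩ | ⟨e1, e2, e3, e4, e5, e6⟩ | ⟨e1, e2, e3, e4, e5, e6⟩ |
      ⟨e1, e2, e3, e4, e5, e6⟩
    · exact ⟨x 0, y 2, e5, e6, (![1, 1, 1], ![1, 1, 1]), by simp [Zlist],
        funext fun i => by fin_cases i <;> simp <;> linarith,
        funext fun i => by fin_cases i <;> simp <;> linarith⟩
    · exact ⟨x 0, -(y 2), e5, neg_ne_zero.mpr e6, (![1, 1, -1], ![1, 1, -1]), by simp [Zlist],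
        funext fun i => by fin_cases i <;> simp <;> linarith,
        funext fun i => by fin_cases i <;> simp <;> linarith⟩
    · exact ⟨x 0, y 2, e5, e6, (![1, -1, 1], ![1, -1, 1]), by simp [Zlist],
        funext fun i => by fin_cases i <;> simp <;> linarith,
        funext fun i => by fin_cases i <;> simp <;> linarith⟩
    · exact ⟨-(x 0), y 2, neg_ne_zero.mpr e5, e6, (![-1, 1, 1], ![-1, 1, 1]), by simp [Zlist],
        funext fun i => by fin_cases i <;> simp <;> linarith,
        funext fun i => by fin_cases i <;> simp <;> linarith⟩
    · exact ⟨x 0, y 1, e5, e6, (![1, t, 0], ![t, 1, 0]), by simp [Zlist],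
        funext fun i => by fin_cases i <;> simp <;> linarith,
        funext fun i => by fin_cases i <;> simp <;> linarith⟩
    · exact ⟨x 0, y 1, e5, e6, (![1, -t, 0], ![-t, 1, 0]), by simp [Zlist],
        funext fun i => by fin_cases i <;> simp <;> linarith,
        funext fun i => by fin_cases i <;> simp <;> linarith⟩
    · exact ⟨x 1, y 2, e5, e6, (![0, 1, t], ![0, t, 1]), by simp [Zlist],
        funext fun i => by fin_cases i <;> simp <;> linarith,
        funext fun i => by fin_cases i <;> simp <;> linarith⟩
    · exact ⟨x 1, y 2, e5, e6, (![0, 1, -t], ![0, -t, 1]), by simp [Zlist],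
        funext fun i => by fin_cases i <;> simp <;> linarith,
        funext fun i => by fin_cases i <;> simp <;> linarith⟩
    · exact ⟨x 2, y 0, e5, e6, (![t, 0, 1], ![1, 0, t]), by simp [Zlist],
        funext fun i => by fin_cases i <;> simp <;> linarith,
        funext fun i => by fin_cases i <;> simp <;> linarith⟩
    · exact ⟨x 2, y 0, e5, e6, (![-t, 0, 1], ![1, 0, -t]), by simp [Zlist],
        funext fun i => by fin_cases i <;> simp <;> linarith,
        funext fun i => by fin_cases i <;> simp <;> linarith⟩
  · rintro ⟨l, m, hl, hm, uv, huv, rfl, rfl⟩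
    fin_cases huv <;>
      · simp only [pform, Pi.smul_apply, Matrix.cons_val_zero, Matrix.cons_val_one,
          Matrix.head_cons, Matrix.cons_val_two, Matrix.tail_cons, smul_eq_mul]
        ring
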